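/- Let κ : ℂⁿ → ℂⁿ be continuously differentiable, M = {u : det J_κ(u) ≠ 0}, and suppose the complement of M is Lebesgue-null and every fiber κ⁻¹({v}) ∩ M has at most m points. Then M can be partitioned (up to a null set) into at most m measurable subsets V₁, …, V_m such that κ restricted to each V_i is injective. -/

import Mathlib

open MeasureTheory Set

/-- a C¹ map `κ : ℂⁿ → ℂⁿ` whose critical set has measure zero and whose
fibers meet `M = {det J_κ ≠ 0}` in at most `m` points admits a partition (up to a null
set) of `M` into `m` measurable pieces on each of which `κ` is injective. -/
theorem stmt_15 (n : ℕ) (κ : (Fin n → ℂ) → (Fin n → ℂ))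
    (hκ : ContDiff ℂ 1 κ)
    (M : Set (Fin n → ℂ))
    (hM : M = {u | (Matrix.of fun i j : Fin n =>
      fderiv ℂ (fun v => κ v i) u (Pi.single j 1)).det ≠ 0})
    (hnull : volume Mᶜ = 0)
    (m : ℕ) (hfib : ∀ v : Fin n → ℂ, (κ ⁻¹' {v} ∩ M).Finite ∧ (κ ⁻¹' {v} ∩ M).ncard ≤ m) :
    ∃ V : Fin m → Set (Fin n → ℂ),
      (∀ i, MeasurableSet (V i)) ∧ (∀ i, V i ⊆ M) ∧
      Pairwise (Function.onFun Disjoint V) ∧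
      (∀ i, Set.InjOn κ (V i)) ∧
      volume (M \ ⋃ i, V i) = 0 := by
  classical
  have hdiff : Differentiable ℂ κ := hκ.differentiable one_ne_zero
  -- the matrix in the statement is the matrix of the total derivative
  have hcomp : ∀ (u : Fin n → ℂ) (i : Fin n), fderiv ℂ (fun v => κ v i) u
      = (ContinuousLinearMap.proj i).comp (fderiv ℂ κ u) := fun u i =>
    (((ContinuousLinearMap.proj i : (Fin n → ℂ) →L[ℂ] ℂ).hasFDerivAt).comp u
      (hdiff u).hasFDerivAt).fderiv
  have hmat : ∀ u : Fin n → ℂ, (Matrix.of fun i j : Fin n =>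
      fderiv ℂ (fun v => κ v i) u (Pi.single j 1))
      = LinearMap.toMatrix' (fderiv ℂ κ u : (Fin n → ℂ) →ₗ[ℂ] (Fin n → ℂ)) := by
    intro u
    ext i j
    have harg : (Pi.single j 1 : Fin n → ℂ) = fun j' => if j' = j then 1 else 0 := by
      funext j'
      simp [Pi.single_apply]
    simp [hcomp u i, LinearMap.toMatrix'_apply, harg]
  -- M is open, hence measurable
  have hMopen : IsOpen M := by
    have hcont : Continuous fun u => (Matrix.of fun i j : Fin n =>
        fderiv ℂ (fun v => κ v i) u (Pi.single j 1)).det := by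
      apply Continuous.matrix_det
      apply continuous_matrix
      intro i j
      have h1 : Continuous (fderiv ℂ κ) := hκ.continuous_fderiv one_ne_zero
      have h2 : Continuous fun u => fderiv ℂ κ u (Pi.single j 1) i :=
        (continuous_apply i).comp
          ((ContinuousLinearMap.apply ℂ (Fin n → ℂ) (Pi.single j 1)).continuous.comp h1)
      have : (fun u => (Matrix.of fun i j : Fin n =>
          fderiv ℂ (fun v => κ v i) u (Pi.single j 1)) i j)
          = fun u => fderiv ℂ κ u (Pi.single j 1) i := by
        funext u
        simp [hcomp u i]
      rw [this]
      exact h2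
    rw [hM]
    have : {u | (Matrix.of fun i j : Fin n =>
        fderiv ℂ (fun v => κ v i) u (Pi.single j 1)).det ≠ 0}
        = (fun u => (Matrix.of fun i j : Fin n =>
        fderiv ℂ (fun v => κ v i) u (Pi.single j 1)).det) ⁻¹' {0}ᶜ := by
      ext u; simp
    rw [this]
    exact isOpen_compl_singleton.preimage hcont
  have hMmeas : MeasurableSet M := hMopen.measurableSet
  -- every point of M has an open neighborhood on which κ is injective
  have hloc : ∀ u ∈ M, ∃ S : Set (Fin n → ℂ), IsOpen S ∧ u ∈ S ∧ InjOn κ S := by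
    intro u hu
    rw [hM, mem_setOf_eq] at hu
    have hdet : (fderiv ℂ κ u).det ≠ 0 := by
      rw [hmat u, LinearMap.det_toMatrix'] at hu
      exact hu
    have hfd : HasFDerivAt κ
        (((fderiv ℂ κ u).toContinuousLinearEquivOfDetNeZero hdet :
          (Fin n → ℂ) ≃L[ℂ] (Fin n → ℂ)) : (Fin n → ℂ) →L[ℂ] (Fin n → ℂ)) u := by
      rw [ContinuousLinearMap.coe_toContinuousLinearEquivOfDetNeZero]
      exact (hdiff u).hasFDerivAt
    have hca : ContDiffAt ℂ 1 κ u := hκ.contDiffAt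
    refine ⟨(hca.toOpenPartialHomeomorph κ hfd one_ne_zero).source,
      (hca.toOpenPartialHomeomorph κ hfd one_ne_zero).open_source,
      hca.mem_toOpenPartialHomeomorph_source hfd one_ne_zero, ?_⟩
    have h := (hca.toOpenPartialHomeomorph κ hfd one_ne_zero).injOn
    rwa [ContDiffAt.toOpenPartialHomeomorph_coe] at h
  -- dispose of the case M = ∅
  rcases M.eq_empty_or_nonempty with hMe | hMne
  · refine ⟨fun _ => ∅, fun _ => MeasurableSet.empty, fun _ => empty_subset _,
      fun i j _ => by simp [Function.onFun], fun _ => injOn_empty _, ?_⟩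
    rw [hMe]
    simp
  -- countable cover of M by open sets of injectivity
  choose S hSopen hSmem hSinj using fun u : M => hloc u u.2
  obtain ⟨T, hTct, hTun⟩ := TopologicalSpace.isOpen_iUnion_countable S hSopen
  have hTne : T.Nonempty := by
    by_contra h
    rw [not_nonempty_iff_eq_empty] at h
    obtain ⟨u, hu⟩ := hMne
    have : (u : Fin n → ℂ) ∈ ⋃ i, S i := mem_iUnion.mpr ⟨⟨u, hu⟩, hSmem ⟨u, hu⟩⟩
    rw [← hTun, h] at this
    simp at this
  obtain ⟨f, hf⟩ := hTct.exists_eq_range hTne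
  set U : ℕ → Set (Fin n → ℂ) := fun k => S (f k) with hU
  have hUopen : ∀ k, IsOpen (U k) := fun k => hSopen (f k)
  have hUinj : ∀ k, InjOn κ (U k) := fun k => hSinj (f k)
  have hUcover : M ⊆ ⋃ k, U k := by
    intro u hu
    have : (u : Fin n → ℂ) ∈ ⋃ i, S i := mem_iUnion.mpr ⟨⟨u, hu⟩, hSmem ⟨u, hu⟩⟩
    rw [← hTun] at this
    obtain ⟨t, ht, hut⟩ := mem_iUnion₂.mp this
    rw [hf] at ht
    obtain ⟨k, rfl⟩ := ht
    exact mem_iUnion.mpr ⟨k, hut⟩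
  -- the disjointified pieces
  set W : ℕ → Set (Fin n → ℂ) := fun k => (U k ∩ M) \ ⋃ j < k, U j with hWdef
  have hWsubU : ∀ k, W k ⊆ U k := fun k u hu => hu.1.1
  have hWsubM : ∀ k, W k ⊆ M := fun k u hu => hu.1.2
  have hWmeas : ∀ k, MeasurableSet (W k) := fun k =>
    (((hUopen k).measurableSet).inter hMmeas).diff
      (MeasurableSet.biUnion (to_countable _) fun j _ => (hUopen j).measurableSet)
  have hWinj : ∀ k, InjOn κ (W k) := fun k => (hUinj k).mono (hWsubU k)
  have hWdisj : ∀ j k (u : Fin n → ℂ), u ∈ W j → u ∈ W k → j = k := by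
    intro j k u hj hk
    by_contra hne
    rcases lt_or_gt_of_ne hne with h | h
    · exact hk.2 (mem_iUnion₂.mpr ⟨j, h, hWsubU j hj⟩)
    · exact hj.2 (mem_iUnion₂.mpr ⟨k, h, hWsubU k hk⟩)
  have hWcover : M ⊆ ⋃ k, W k := by
    intro u hu
    have hex : ∃ k, u ∈ U k := mem_iUnion.mp (hUcover hu)
    refine mem_iUnion.mpr ⟨Nat.find hex, ⟨⟨Nat.find_spec hex, hu⟩, ?_⟩⟩
    intro hmem
    obtain ⟨j, hj, huj⟩ := mem_iUnion₂.mp hmem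
    exact absurd huj (Nat.find_min hex hj)
  -- images κ '' W k are measurable (Lusin–Souslin)
  have hTmeas : ∀ k, MeasurableSet (κ '' W k) := fun k =>
    (hWmeas k).image_of_continuousOn_injOn hκ.continuous.continuousOn (hWinj k)
  -- the counting function
  set cnt : ℕ → (Fin n → ℂ) → ℕ :=
    fun k u => ((Finset.range k).filter fun j => κ u ∈ κ '' W j).card with hcnt
  have hcntmeas : ∀ k, Measurable (cnt k) := by
    intro k
    have : cnt k = fun u => ∑ j ∈ Finset.range k, if κ u ∈ κ '' W j then 1 else 0 := by
      funext u
      rw [hcnt]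
      exact Finset.card_filter _ _
    rw [this]
    apply Finset.measurable_sum
    intro j _
    exact Measurable.ite (hκ.continuous.measurable (hTmeas j)) measurable_const measurable_const
  -- key monotonicity of the counting function along fibers
  have key : ∀ (k k' : ℕ) (u u' : Fin n → ℂ), k < k' → u ∈ W k → u' ∈ W k' →
      κ u = κ u' → cnt k u < cnt k' u' := by
    intro k k' u u' hkk' hu hu' heq
    have hsub : ((Finset.range k).filter fun j => κ u ∈ κ '' W j)
        ⊂ (Finset.range k').filter fun j => κ u' ∈ κ '' W j := by
      constructor
      · intro j hj
        rw [Finset.mem_filter] at hj ⊢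
        exact ⟨Finset.mem_range.mpr (lt_trans (Finset.mem_range.mp hj.1) hkk'),
          heq ▸ hj.2⟩
      · intro hcon
        have hk : k ∈ (Finset.range k').filter fun j => κ u' ∈ κ '' W j := by
          rw [Finset.mem_filter]
          exact ⟨Finset.mem_range.mpr hkk', ⟨u, hu, heq⟩⟩
        have := hcon hk
        rw [Finset.mem_filter, Finset.mem_range] at this
        exact lt_irrefl k this.1
    exact Finset.card_lt_card hsub
  -- the counting function is < m on M
  have hcntlt : ∀ k (u : Fin n → ℂ), u ∈ W k → cnt k u < m := by
    intro k u hu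
    set F := (Finset.range k).filter fun j => κ u ∈ κ '' W j with hF
    have hwit : ∀ j ∈ insert k F, ∃ v, v ∈ W j ∧ κ v = κ u := by
      intro j hj
      rcases Finset.mem_insert.mp hj with rfl | hj
      · exact ⟨u, hu, rfl⟩
      · rw [hF, Finset.mem_filter] at hj
        obtain ⟨v, hv, hkv⟩ := hj.2
        exact ⟨v, hv, hkv⟩
    choose! w hw1 hw2 using hwit
    have hkF : k ∉ F := by
      rw [hF]
      intro hk
      rw [Finset.mem_filter, Finset.mem_range] at hk
      exact lt_irrefl k hk.1
    have hfin := (hfib (κ u)).1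
    have hcard : (insert k F).card ≤ hfin.toFinset.card := by
      apply Finset.card_le_card_of_injOn w
      · intro j hj
        rw [Finset.mem_coe, Set.Finite.mem_toFinset]
        exact ⟨by rw [mem_preimage, hw2 j hj]; rfl, hWsubM j (hw1 j hj)⟩
      · intro j hj j' hj' hww
        exact hWdisj j j' (w j) (hw1 j hj) (hww ▸ hw1 j' hj')
    rw [Finset.card_insert_of_notMem hkF] at hcard
    have hle : (κ ⁻¹' {κ u} ∩ M).ncard ≤ m := (hfib (κ u)).2
    rw [Set.ncard_eq_toFinset_card _ hfin] at hle
    have hcu : cnt k u = F.card := rfl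
    omega
  -- define the pieces
  refine ⟨fun i => ⋃ k, W k ∩ {u | cnt k u = i.val}, ?_, ?_, ?_, ?_, ?_⟩
  · intro i
    exact MeasurableSet.iUnion fun k =>
      (hWmeas k).inter ((hcntmeas k) (measurableSet_singleton i.val))
  · intro i u hu
    obtain ⟨k, hk, _⟩ := mem_iUnion.mp hu
    exact hWsubM k hk
  · intro i i' hne
    rw [Function.onFun, Set.disjoint_left]
    intro u hu hu'
    obtain ⟨k, hk⟩ := mem_iUnion.mp hu
    obtain ⟨k', hk'⟩ := mem_iUnion.mp hu'
    have hkk : k = k' := hWdisj k k' u hk.1 hk'.1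
    apply hne
    apply Fin.ext
    rw [← hk.2, ← hk'.2, hkk]
  · intro i u hu u' hu' heq
    obtain ⟨k, hk⟩ := mem_iUnion.mp hu
    obtain ⟨k', hk'⟩ := mem_iUnion.mp hu'
    rcases lt_trichotomy k k' with h | rfl | h
    · exfalso
      have := key k k' u u' h hk.1 hk'.1 heq
      rw [hk.2, hk'.2] at this
      exact lt_irrefl _ this
    · exact hWinj k hk.1 hk'.1 heq
    · exfalso
      have := key k' k u' u h hk'.1 hk.1 heq.symm
      rw [hk.2, hk'.2] at this
      exact lt_irrefl _ this
  · have : M \ ⋃ i : Fin m, ⋃ k, W k ∩ {u | cnt k u = i.val} = ∅ := by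
      rw [Set.diff_eq_empty]
      intro u hu
      obtain ⟨k, hk⟩ := mem_iUnion.mp (hWcover hu)
      exact mem_iUnion.mpr ⟨⟨cnt k u, hcntlt k u hk⟩, mem_iUnion.mpr ⟨k, hk, rfl⟩⟩
    rw [this, measure_empty]
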